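/- Let r ≥ 1 be an integer, let b_1, …, b_r be positive real numbers, let 0 > ν_1 > ν_2 > ⋯ > ν_r be real numbers, and let γ_1, …, γ_r be real numbers with Σ_{j=1}^{i} γ_j ≤ 0 for every 1 ≤ i ≤ r and Σ_{j=1}^{r} γ_j = 0. Set ρ_i = b_i − γ_i/ν_i and assume ρ_i > 0 for every i. Then Σ_{i=1}^{r} ρ_i ≤ Σ_{i=1}^{r} b_i, and (Σ_{i=1}^{r} ν_i b_i)/(Σ_{i=1}^{r} b_i) ≥ (Σ_{i=1}^{r} ν_iρ_i)/(Σ_{i=1}^{r} ρ_i), with equality if and only if γ_1 = γ_2 = ⋯ = γ_r = 0. -/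

import Mathlib

open Finset

private lemma key_le (r : ℕ) (ν γ : ℕ → ℝ)
    (hν0 : ∀ i, 1 ≤ i → i ≤ r → ν i < 0)
    (hνadj : ∀ i, 1 ≤ i → i + 1 ≤ r → ν (i+1) < ν i)
    (hG : ∀ i, 1 ≤ i → i ≤ r → ∑ j ∈ Icc 1 i, γ j ≤ 0) :
    ∀ n, 1 ≤ n → n ≤ r →
      (∑ j ∈ Icc 1 n, γ j) / ν n ≤ ∑ i ∈ Icc 1 n, γ i / ν i := by
  intro n
  induction n with
  | zero => omega
  | succ m ih =>
    intro h1 hmr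
    by_cases hm : m = 0
    · subst hm; simp
    have hm1 : 1 ≤ m := by omega
    have hmr' : m ≤ r := by omega
    rw [Finset.sum_Icc_succ_top (by omega : 1 ≤ m + 1),
        Finset.sum_Icc_succ_top (by omega : 1 ≤ m + 1)]
    have hle := ih hm1 hmr'
    have hνm : ν m < 0 := hν0 m hm1 hmr'
    have hνm1 : ν (m+1) < 0 := hν0 (m+1) (by omega) hmr
    have hadj : ν (m+1) < ν m := hνadj m hm1 hmr
    have hGm : ∑ j ∈ Icc 1 m, γ j ≤ 0 := hG m hm1 hmr'
    have step : (∑ j ∈ Icc 1 m, γ j) / ν (m+1) ≤ (∑ j ∈ Icc 1 m, γ j) / ν m := by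
      have h1v : 1 / ν m ≤ 1 / ν (m+1) :=
        one_div_le_one_div_of_neg_of_le hνm hadj.le
      have := mul_le_mul_of_nonpos_left h1v hGm
      rwa [mul_one_div, mul_one_div] at this
    rw [add_div]
    linarith

private lemma key_lt (r : ℕ) (ν γ : ℕ → ℝ)
    (hν0 : ∀ i, 1 ≤ i → i ≤ r → ν i < 0)
    (hνadj : ∀ i, 1 ≤ i → i + 1 ≤ r → ν (i+1) < ν i)
    (hG : ∀ i, 1 ≤ i → i ≤ r → ∑ j ∈ Icc 1 i, γ j ≤ 0)
    (k : ℕ) (hk1 : 1 ≤ k) (hGk : ∑ j ∈ Icc 1 k, γ j < 0) :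
    ∀ n, k < n → n ≤ r →
      (∑ j ∈ Icc 1 n, γ j) / ν n < ∑ i ∈ Icc 1 n, γ i / ν i := by
  intro n
  induction n with
  | zero => omega
  | succ m ih =>
    intro hkm hmr
    have hm1 : 1 ≤ m := by omega
    have hmr' : m ≤ r := by omega
    rw [Finset.sum_Icc_succ_top (by omega : 1 ≤ m + 1),
        Finset.sum_Icc_succ_top (by omega : 1 ≤ m + 1)]
    have hνm : ν m < 0 := hν0 m hm1 hmr'
    have hνm1 : ν (m+1) < 0 := hν0 (m+1) (by omega) hmr
    have hadj : ν (m+1) < ν m := hνadj m hm1 hmr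
    have hGm : ∑ j ∈ Icc 1 m, γ j ≤ 0 := hG m hm1 hmr'
    have h1v : 1 / ν m ≤ 1 / ν (m+1) :=
      one_div_le_one_div_of_neg_of_le hνm hadj.le
    rcases Nat.lt_or_ge k m with hkm' | hkm'
    · have hlt := ih hkm' hmr'
      have step : (∑ j ∈ Icc 1 m, γ j) / ν (m+1) ≤ (∑ j ∈ Icc 1 m, γ j) / ν m := by
        have := mul_le_mul_of_nonpos_left h1v hGm
        rwa [mul_one_div, mul_one_div] at this
      rw [add_div]
      linarith
    · have hk : k = m := by omega
      subst hk
      have hle := key_le r ν γ hν0 hνadj hG k hk1 hmr'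
      have h1v' : 1 / ν k < 1 / ν (k+1) :=
        one_div_lt_one_div_of_neg_of_lt hνm hadj
      have step : (∑ j ∈ Icc 1 k, γ j) / ν (k+1) < (∑ j ∈ Icc 1 k, γ j) / ν k := by
        have := mul_lt_mul_of_neg_left h1v' hGk
        rwa [mul_one_div, mul_one_div] at this
      rw [add_div]
      linarith

/-- Numerical core of Claim 6.8 in the proof of Theorem 6.4. Pieces are indexed by
`1, …, r`. -/
theorem stmt_6 (r : ℕ) (hr : 1 ≤ r)
    (b ν γ ρ : ℕ → ℝ)
    (hb : ∀ i, 1 ≤ i → i ≤ r → 0 < b i)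
    (hνneg : ν 1 < 0)
    (hν : ∀ i j, 1 ≤ i → i < j → j ≤ r → ν j < ν i)
    (hγpartial : ∀ i, 1 ≤ i → i ≤ r → ∑ j ∈ Finset.Icc 1 i, γ j ≤ 0)
    (hγtotal : ∑ j ∈ Finset.Icc 1 r, γ j = 0)
    (hρdef : ∀ i, ρ i = b i - γ i / ν i)
    (hρpos : ∀ i, 1 ≤ i → i ≤ r → 0 < ρ i) :
    (∑ i ∈ Finset.Icc 1 r, ρ i) ≤ (∑ i ∈ Finset.Icc 1 r, b i)
    ∧ (∑ i ∈ Finset.Icc 1 r, ν i * b i) / (∑ i ∈ Finset.Icc 1 r, b i)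
        ≥ (∑ i ∈ Finset.Icc 1 r, ν i * ρ i) / (∑ i ∈ Finset.Icc 1 r, ρ i)
    ∧ ((∑ i ∈ Finset.Icc 1 r, ν i * b i) / (∑ i ∈ Finset.Icc 1 r, b i)
          = (∑ i ∈ Finset.Icc 1 r, ν i * ρ i) / (∑ i ∈ Finset.Icc 1 r, ρ i)
        ↔ ∀ i, 1 ≤ i → i ≤ r → γ i = 0) := by
  classical
  have hν0 : ∀ i, 1 ≤ i → i ≤ r → ν i < 0 := by
    intro i h1 h2
    rcases Nat.eq_or_lt_of_le h1 with h | h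
    · rw [← h]; exact hνneg
    · exact lt_trans (hν 1 i le_rfl h h2) hνneg
  have hνadj : ∀ i, 1 ≤ i → i + 1 ≤ r → ν (i+1) < ν i :=
    fun i h1 h2 => hν i (i+1) h1 (by omega) h2
  have hne : (Finset.Icc 1 r).Nonempty := by
    exact ⟨1, by simp [hr]⟩
  -- sum of γ/ν is nonnegative
  have hS : 0 ≤ ∑ i ∈ Finset.Icc 1 r, γ i / ν i := by
    have := key_le r ν γ hν0 hνadj hγpartial r hr le_rfl
    rw [hγtotal, zero_div] at this
    exact this
  have hPB : (∑ i ∈ Finset.Icc 1 r, ρ i)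
      = (∑ i ∈ Finset.Icc 1 r, b i) - ∑ i ∈ Finset.Icc 1 r, γ i / ν i := by
    rw [← Finset.sum_sub_distrib]
    exact Finset.sum_congr rfl fun i _ => hρdef i
  have part1 : (∑ i ∈ Finset.Icc 1 r, ρ i) ≤ (∑ i ∈ Finset.Icc 1 r, b i) := by
    rw [hPB]; linarith
  have hNeq : (∑ i ∈ Finset.Icc 1 r, ν i * ρ i) = ∑ i ∈ Finset.Icc 1 r, ν i * b i := by
    have : ∀ i ∈ Finset.Icc 1 r, ν i * ρ i = ν i * b i - γ i := by
      intro i hi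
      simp only [Finset.mem_Icc] at hi
      have hνne : ν i ≠ 0 := (hν0 i hi.1 hi.2).ne
      rw [hρdef i]
      field_simp
    rw [Finset.sum_congr rfl this, Finset.sum_sub_distrib, hγtotal, sub_zero]
  have hB : 0 < ∑ i ∈ Finset.Icc 1 r, b i :=
    Finset.sum_pos (fun i hi => by
      simp only [Finset.mem_Icc] at hi; exact hb i hi.1 hi.2) hne
  have hP : 0 < ∑ i ∈ Finset.Icc 1 r, ρ i :=
    Finset.sum_pos (fun i hi => by
      simp only [Finset.mem_Icc] at hi; exact hρpos i hi.1 hi.2) hne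
  have hN : (∑ i ∈ Finset.Icc 1 r, ν i * ρ i) < 0 :=
    Finset.sum_neg (fun i hi => by
      simp only [Finset.mem_Icc] at hi
      exact mul_neg_of_neg_of_pos (hν0 i hi.1 hi.2) (hρpos i hi.1 hi.2)) hne
  have part2 : (∑ i ∈ Finset.Icc 1 r, ν i * b i) / (∑ i ∈ Finset.Icc 1 r, b i)
      ≥ (∑ i ∈ Finset.Icc 1 r, ν i * ρ i) / (∑ i ∈ Finset.Icc 1 r, ρ i) := by
    rw [← hNeq, ge_iff_le, div_le_div_iff₀ hP hB]
    exact mul_le_mul_of_nonpos_left part1 hN.le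
  refine ⟨part1, part2, ?_, ?_⟩
  · -- equality implies all γ vanish
    intro heq
    by_contra hcon
    push_neg at hcon
    have hex : ∃ i, 1 ≤ i ∧ i ≤ r ∧ γ i ≠ 0 := hcon
    set k := Nat.find hex with hkdef
    obtain ⟨hk1, hkr, hγk⟩ := Nat.find_spec hex
    have hGk : ∑ j ∈ Finset.Icc 1 k, γ j = γ k := by
      refine Finset.sum_eq_single_of_mem k (Finset.mem_Icc.mpr ⟨hk1, le_rfl⟩) ?_
      intro j hj hjk
      simp only [Finset.mem_Icc] at hj
      by_contra hj0
      have hjlt : j < k := lt_of_le_of_ne hj.2 hjk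
      exact Nat.find_min hex hjlt ⟨hj.1, le_trans hj.2 hkr, hj0⟩
    have hGk' : ∑ j ∈ Finset.Icc 1 k, γ j < 0 := by
      rcases lt_or_eq_of_le (hγpartial k hk1 hkr) with h | h
      · exact h
      · rw [hGk] at h; exact absurd h hγk
    have hkr' : k < r := by
      rcases Nat.lt_or_ge k r with h | h
      · exact h
      · exfalso
        have : k = r := le_antisymm hkr h
        rw [this, hγtotal] at hGk'
        exact lt_irrefl 0 hGk'
    have hS' : 0 < ∑ i ∈ Finset.Icc 1 r, γ i / ν i := by
      have := key_lt r ν γ hν0 hνadj hγpartial k hk1 hGk' r hkr' le_rfl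
      rw [hγtotal, zero_div] at this
      exact this
    have hPlt : (∑ i ∈ Finset.Icc 1 r, ρ i) < ∑ i ∈ Finset.Icc 1 r, b i := by
      rw [hPB]; linarith
    rw [← hNeq, div_eq_div_iff hB.ne' hP.ne'] at heq
    nlinarith
  · -- all γ vanish implies equality
    intro h0
    have e1 : (∑ i ∈ Finset.Icc 1 r, ρ i) = ∑ i ∈ Finset.Icc 1 r, b i := by
      refine Finset.sum_congr rfl fun i hi => ?_
      simp only [Finset.mem_Icc] at hi
      rw [hρdef i, h0 i hi.1 hi.2, zero_div, sub_zero]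
    rw [hNeq, e1]
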